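/- Let K ≤ N/3 - 1 and define x ∈ ℝ^N as follows: partition indices into H blocks of length L plus a tail of length ≥ K+1; on block j (j ≤ H) set all entries to ν·s_j, and on the tail set the last K entries alternately to ±μ·s_{H+1} and the rest to 0, where μ = 1/√(2K), ν = 1/√(2N), L = √(4NK/(2K-1)²), and s ∈ {±1}^{H+1} is any sign vector. Then ‖x‖₂ ≤ 1 and there exists an index set 𝒦₀ with |𝒦₀| = K such that ‖(Dx)_{𝒦₀}‖₁ ≥ ‖(Dx)_{𝒦₀ᶜ}‖₁. -/

import Mathlib

open Finset

/-- Finite difference operator: `(Df x) i = x (i+1) - x i`. -/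
noncomputable def Df {N : ℕ} (x : Fin N → ℝ) : Fin (N - 1) → ℝ :=
  fun i => x ⟨i.val + 1, by have := i.isLt; omega⟩ - x ⟨i.val, by have := i.isLt; omega⟩

noncomputable def l1 {m : ℕ} (v : Fin m → ℝ) : ℝ := ∑ i, |v i|

noncomputable def l2 {m : ℕ} (v : Fin m → ℝ) : ℝ := Real.sqrt (∑ i, v i ^ 2)

noncomputable def restr {m : ℕ} (K : Finset (Fin m)) (v : Fin m → ℝ) : Fin m → ℝ :=
  fun i => if i ∈ K then v i else 0

lemma l1_restr {m : ℕ} (S : Finset (Fin m)) (v : Fin m → ℝ) :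
    l1 (restr S v) = ∑ i ∈ S, |v i| := by
  unfold l1 restr
  have h : ∀ i, |if i ∈ S then v i else 0| = if i ∈ S then |v i| else 0 := fun i => by
    split_ifs <;> simp
  simp_rw [h]
  rw [Finset.sum_ite_mem, Finset.univ_inter]

lemma sum_indic (m a : ℕ) (c : ℝ) :
    ∑ j ∈ Finset.range m, (if a ≤ j then c else 0) = ((m - a : ℕ) : ℝ) * c := by
  rw [← Finset.sum_filter]
  have h : (Finset.range m).filter (fun j => a ≤ j) = Finset.Ico a m := by
    ext j; simp [Finset.mem_Ico]; omega
  rw [h, Finset.sum_const, Nat.card_Ico, nsmul_eq_mul]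

lemma card_filter_ge (m a : ℕ) :
    (Finset.univ.filter (fun i : Fin m => a ≤ i.val)).card = m - a := by
  rw [Finset.card_filter]
  rw [Fin.sum_univ_eq_sum_range (fun j => if a ≤ j then 1 else 0) m]
  rw [← Finset.sum_filter]
  have h : (Finset.range m).filter (fun j => a ≤ j) = Finset.Ico a m := by
    ext j; simp [Finset.mem_Ico]; omega
  rw [h, Finset.sum_const, Nat.card_Ico, smul_eq_mul, mul_one]

set_option maxHeartbeats 2000000 in
theorem stmt9 (N K : ℕ) (hK1 : 1 ≤ K) (hKN : (K : ℝ) ≤ (N : ℝ) / 3 - 1)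
    (s : ℕ → ℝ) (hs : ∀ t, s t = 1 ∨ s t = -1) :
    let μ : ℝ := 1 / Real.sqrt (2 * K)
    let ν : ℝ := 1 / Real.sqrt (2 * N)
    let Lr : ℝ := Real.sqrt (4 * N * K / (2 * (K : ℝ) - 1) ^ 2)
    let H : ℕ := ⌊((N : ℝ) - max ((K : ℝ) + 1) Lr) / Lr⌋₊
    let x : Fin N → ℝ := fun j =>
      if ((j : ℕ) : ℝ) < H * Lr then ν * s ⌊((j : ℕ) : ℝ) / Lr⌋₊
      else if N - K ≤ (j : ℕ) then μ * s H * (-1) ^ (j : ℕ)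
      else 0
    l2 x ≤ 1 ∧ ∃ 𝒦₀ : Finset (Fin (N - 1)), 𝒦₀.card = K ∧
      l1 (restr 𝒦₀ᶜ (Df x)) ≤ l1 (restr 𝒦₀ (Df x)) := by
  intro μ ν Lr H x
  classical
  have hssq : ∀ t, (s t)^2 = 1 := fun t => by rcases hs t with h | h <;> rw [h] <;> norm_num
  have hsabs : ∀ t, |s t| = 1 := fun t => by rcases hs t with h | h <;> rw [h] <;> norm_num
  have hnegsq : ∀ n : ℕ, ((-1:ℝ)^n)^2 = 1 := fun n => by
    rw [← pow_mul, mul_comm, pow_mul]; norm_num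
  have hnegabs : ∀ n : ℕ, |(-1:ℝ)^n| = 1 := fun n => by
    rw [abs_pow, abs_neg, abs_one, one_pow]
  have hN3 : 3 * K + 3 ≤ N := by
    have h : (3:ℝ) * K + 3 ≤ (N:ℝ) := by linarith
    exact_mod_cast h
  have hNr3 : (3:ℝ) * K + 3 ≤ (N:ℝ) := by exact_mod_cast hN3
  have hKr1 : (1:ℝ) ≤ (K:ℝ) := by exact_mod_cast hK1
  have hNr : (0:ℝ) < N := by
    have h : 0 < N := by omega
    exact_mod_cast h
  have hKr : (0:ℝ) < K := by linarith
  have hμpos : 0 < μ := by unfold μ; positivity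
  have hνpos : 0 < ν := by unfold ν; positivity
  have hμsq : μ^2 = 1/(2*(K:ℝ)) := by
    unfold μ; rw [div_pow, one_pow, Real.sq_sqrt (by positivity)]
  have hνsq : ν^2 = 1/(2*(N:ℝ)) := by
    unfold ν; rw [div_pow, one_pow, Real.sq_sqrt (by positivity)]
  have hLrsq : Lr^2 = 4*(N:ℝ)*K/(2*(K:ℝ)-1)^2 := by
    unfold Lr; rw [Real.sq_sqrt (by positivity)]
  have hLrnn : 0 ≤ Lr := by unfold Lr; positivity
  have hLrsq1 : (1:ℝ) ≤ Lr^2 := by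
    rw [hLrsq, le_div_iff₀ (by nlinarith)]
    nlinarith
  have hLr1 : (1:ℝ) ≤ Lr := by nlinarith
  have hLrpos : (0:ℝ) < Lr := by linarith
  -- bound on H * Lr
  have hHLr : (H:ℝ) * Lr ≤ (N:ℝ) - K - 1 := by
    have hmax : (K:ℝ) + 1 ≤ max ((K:ℝ)+1) Lr := le_max_left _ _
    by_cases hr : 0 ≤ ((N:ℝ) - max ((K:ℝ)+1) Lr) / Lr
    · have h1 : (H:ℝ) ≤ ((N:ℝ) - max ((K:ℝ)+1) Lr) / Lr := Nat.floor_le hr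
      have h2 := mul_le_mul_of_nonneg_right h1 hLrnn
      rw [div_mul_cancel₀ _ (ne_of_gt hLrpos)] at h2
      linarith
    · have h0 : H = 0 := Nat.floor_of_nonpos (le_of_not_ge hr)
      rw [h0]
      push_cast
      linarith
  -- evaluation of x
  have hx_tail : ∀ (j : ℕ) (hj : j < N), N - K ≤ j →
      x ⟨j, hj⟩ = μ * s H * (-1)^j := by
    intro j hj hjt
    have hjr : (N:ℝ) - K ≤ (j:ℝ) := by
      have h : ((N - K : ℕ):ℝ) ≤ (j:ℝ) := by exact_mod_cast hjt
      rwa [Nat.cast_sub (by omega)] at h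
    show (if ((j : ℕ) : ℝ) < H * Lr then ν * s ⌊((j : ℕ) : ℝ) / Lr⌋₊
      else if N - K ≤ j then μ * s H * (-1) ^ j else 0) = μ * s H * (-1)^j
    rw [if_neg (by push_cast; nlinarith), if_pos hjt]
  have hx_zero : ∀ (j : ℕ) (hj : j < N), (H:ℝ) * Lr ≤ (j:ℝ) → ¬ (N - K ≤ j) →
      x ⟨j, hj⟩ = 0 := by
    intro j hj h1 h2
    show (if ((j : ℕ) : ℝ) < H * Lr then ν * s ⌊((j : ℕ) : ℝ) / Lr⌋₊
      else if N - K ≤ j then μ * s H * (-1) ^ j else 0) = 0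
    rw [if_neg (not_lt.mpr h1), if_neg h2]
  have hx_block : ∀ (j : ℕ) (hj : j < N), j + K + 1 ≤ N →
      x ⟨j, hj⟩ = (if ⌊(j:ℝ)/Lr⌋₊ < H then ν * s ⌊(j:ℝ)/Lr⌋₊ else 0) := by
    intro j hj h2
    have hiff : ((j:ℝ) < (H:ℝ) * Lr) ↔ ⌊(j:ℝ)/Lr⌋₊ < H := by
      rw [Nat.floor_lt (by positivity), div_lt_iff₀ hLrpos]
    show (if ((j : ℕ) : ℝ) < H * Lr then ν * s ⌊((j : ℕ) : ℝ) / Lr⌋₊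
      else if N - K ≤ j then μ * s H * (-1) ^ j else 0) = _
    by_cases hc : (j:ℝ) < (H:ℝ)*Lr
    · rw [if_pos hc, if_pos (hiff.mp hc)]
    · rw [if_neg hc, if_neg (by omega : ¬ (N - K ≤ j)),
        if_neg (fun hlt => hc (hiff.mpr hlt))]
  -- floor step lemmas
  have hfloor_mono : ∀ (u v : ℕ), u ≤ v → ⌊(u:ℝ)/Lr⌋₊ ≤ ⌊(v:ℝ)/Lr⌋₊ := by
    intro u v huv
    apply Nat.floor_mono
    apply div_le_div_of_nonneg_right ?_ hLrnn
    exact_mod_cast huv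
  have hstep : ∀ j : ℕ, ⌊((j+1:ℕ):ℝ)/Lr⌋₊ ≤ ⌊(j:ℝ)/Lr⌋₊ + 1 := by
    intro j
    have h1 : ((j+1:ℕ):ℝ)/Lr ≤ (j:ℝ)/Lr + 1 := by
      push_cast
      rw [add_div]
      have h2 : 1/Lr ≤ 1 := by rw [div_le_one hLrpos]; exact hLr1
      linarith
    calc ⌊((j+1:ℕ):ℝ)/Lr⌋₊ ≤ ⌊(j:ℝ)/Lr + 1⌋₊ := Nat.floor_mono h1
      _ = ⌊(j:ℝ)/Lr⌋₊ + 1 := Nat.floor_add_one (by positivity)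
  -- the index set
  set KK : Finset (Fin (N-1)) := univ.filter (fun i => N - K - 1 ≤ i.val) with hKK
  have hKKcard : KK.card = K := by
    rw [hKK, card_filter_ge]; omega
  -- sum over KK
  have hDf_K : ∀ i : Fin (N-1), N - K - 1 ≤ i.val →
      |Df x i| = if i.val = N - K - 1 then μ else 2*μ := by
    intro i hi
    have hi2 : i.val < N - 1 := i.isLt
    have e1 : Df x i = x ⟨i.val+1, by omega⟩ - x ⟨i.val, by omega⟩ := rfl
    by_cases hc : i.val = N - K - 1
    · rw [if_pos hc, e1, hx_tail (i.val+1) (by omega) (by omega),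
        hx_zero i.val (by omega) (by
          have hcast : ((i.val : ℕ) : ℝ) = (N:ℝ) - K - 1 := by
            rw [hc, Nat.cast_sub (by omega), Nat.cast_sub (by omega), Nat.cast_one]
          rw [hcast]; exact hHLr) (by omega), sub_zero]
      rw [abs_mul, abs_mul, hsabs, hnegabs, abs_of_pos hμpos]; ring
    · rw [if_neg hc, e1, hx_tail (i.val+1) (by omega) (by omega),
        hx_tail i.val (by omega) (by omega)]
      rw [pow_succ]
      rw [show μ * s H * ((-1:ℝ)^i.val * -1) - μ * s H * (-1:ℝ)^i.val
            = (-2) * (μ * (s H * (-1:ℝ)^i.val)) from by ring]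
      rw [abs_mul, abs_mul, abs_mul, hsabs, hnegabs, abs_of_pos hμpos]
      norm_num
  have hRHS : ∑ i ∈ KK, |Df x i| = (2*(K:ℝ)-1) * μ := by
    rw [Finset.sum_congr rfl (fun i hi => hDf_K i (by
      rw [hKK, Finset.mem_filter] at hi; exact hi.2))]
    rw [Finset.sum_ite, Finset.sum_const, Finset.sum_const]
    have hc1 : (KK.filter (fun i => i.val = N-K-1)).card = 1 := by
      rw [show KK.filter (fun i => i.val = N-K-1) = {(⟨N-K-1, by omega⟩ : Fin (N-1))} from by
        ext j; simp [hKK, Fin.ext_iff]; omega]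
      rfl
    have htot := Finset.card_filter_add_card_filter_not
      (s := KK) (p := fun i : Fin (N-1) => i.val = N-K-1)
    have hc2 : (KK.filter (fun i => ¬ i.val = N-K-1)).card = K - 1 := by omega
    rw [hc1, hc2]
    simp only [nsmul_eq_mul, Nat.cast_sub hK1, Nat.cast_one]
    ring
  -- sum over complement
  have hDf_compl : ∀ i : Fin (N-1), i.val < N - K - 1 →
      |Df x i| ≤ if (⌊((i.val+1:ℕ):ℝ)/Lr⌋₊ = ⌊((i.val:ℕ):ℝ)/Lr⌋₊ + 1 ∧ ⌊((i.val:ℕ):ℝ)/Lr⌋₊ < H)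
        then 2*ν else 0 := by
    intro i hi
    have hi2 : i.val < N - 1 := i.isLt
    have e1 : Df x i = x ⟨i.val+1, by omega⟩ - x ⟨i.val, by omega⟩ := rfl
    rw [e1, hx_block (i.val+1) (by omega) (by omega), hx_block i.val (by omega) (by omega)]
    set a := ⌊((i.val:ℕ):ℝ)/Lr⌋₊ with ha
    set b := ⌊((i.val+1:ℕ):ℝ)/Lr⌋₊ with hb
    have hab1 : a ≤ b := hfloor_mono _ _ (by omega)
    have hab2 : b ≤ a + 1 := hstep i.val
    have hbound : ∀ t : ℕ, |if t < H then ν * s t else 0| ≤ ν := by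
      intro t; split_ifs
      · rw [abs_mul, hsabs, mul_one, abs_of_pos hνpos]
      · simp [le_of_lt hνpos]
    by_cases hP : b = a + 1 ∧ a < H
    · rw [if_pos hP]
      calc |(if b < H then ν * s b else 0) - (if a < H then ν * s a else 0)|
          ≤ |(if b < H then ν * s b else 0)| + |(if a < H then ν * s a else 0)| := abs_sub _ _
        _ ≤ ν + ν := add_le_add (hbound b) (hbound a)
        _ = 2*ν := by ring
    · rw [if_neg hP]
      have hcase : b = a ∨ H ≤ a := by omega
      rcases hcase with h | h
      · rw [h, sub_self, abs_zero]
      · rw [if_neg (by omega), if_neg (by omega), sub_zero, abs_zero]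
  have hmemc : ∀ i : Fin (N-1), i ∈ KKᶜ → i.val < N - K - 1 := by
    intro i hi
    rw [Finset.mem_compl, hKK, Finset.mem_filter] at hi
    push_neg at hi
    have := hi (Finset.mem_univ i)
    omega
  set P : Fin (N-1) → Prop := fun i =>
    (⌊((i.val+1:ℕ):ℝ)/Lr⌋₊ = ⌊((i.val:ℕ):ℝ)/Lr⌋₊ + 1 ∧ ⌊((i.val:ℕ):ℝ)/Lr⌋₊ < H) with hP
  have hPdef : ∀ i : Fin (N-1), P i ↔
      (⌊((i.val+1:ℕ):ℝ)/Lr⌋₊ = ⌊((i.val:ℕ):ℝ)/Lr⌋₊ + 1 ∧ ⌊((i.val:ℕ):ℝ)/Lr⌋₊ < H) :=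
    fun i => by rw [hP]
  have hCcard : (KKᶜ.filter P).card ≤ H := by
    have h := Finset.card_le_card_of_injOn (s := KKᶜ.filter P) (t := Finset.range H)
      (fun i : Fin (N-1) => ⌊((i.val:ℕ):ℝ)/Lr⌋₊)
      (fun i hi => by
        rw [Finset.mem_coe, Finset.mem_range]
        exact ((hPdef i).mp (Finset.mem_filter.mp hi).2).2)
      (by
        intro i hi i' hi' heq
        simp only [Finset.coe_filter, Set.mem_setOf_eq] at hi hi'
        by_contra hne
        have heq2 : ⌊((i.val:ℕ):ℝ)/Lr⌋₊ = ⌊((i'.val:ℕ):ℝ)/Lr⌋₊ := heq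
        have hvne : i.val ≠ i'.val := fun hv => hne (Fin.ext hv)
        rcases Nat.lt_or_ge i.val i'.val with hlt | hge
        · have hm := hfloor_mono (i.val+1) i'.val (by omega)
          have h1 := ((hPdef i).mp hi.2).1
          omega
        · have hlt' : i'.val < i.val := by omega
          have hm := hfloor_mono (i'.val+1) i.val (by omega)
          have h1 := ((hPdef i').mp hi'.2).1
          omega)
    simpa using h
  have hLHS : ∑ i ∈ KKᶜ, |Df x i| ≤ 2*ν*(H:ℝ) := by
    calc ∑ i ∈ KKᶜ, |Df x i|
        ≤ ∑ i ∈ KKᶜ, (if P i then 2*ν else 0) :=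
          Finset.sum_le_sum (fun i hi => hDf_compl i (hmemc i hi))
      _ = ∑ i ∈ KKᶜ.filter P, (2*ν) := (Finset.sum_filter _ _).symm
      _ = ((KKᶜ.filter P).card : ℝ) * (2*ν) := by rw [Finset.sum_const, nsmul_eq_mul]
      _ ≤ (H:ℝ) * (2*ν) := by
          apply mul_le_mul_of_nonneg_right _ (by positivity)
          exact_mod_cast hCcard
      _ = 2*ν*(H:ℝ) := by ring
  -- the key numeric inequality
  have hKne : (K:ℝ) ≠ 0 := ne_of_gt hKr
  have hNne : (N:ℝ) ≠ 0 := ne_of_gt hNr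
  have h2K1ne : (2*(K:ℝ)-1) ≠ 0 := by linarith
  have hsq2 : (2*ν*(N:ℝ))^2 = ((2*(K:ℝ)-1)*μ*Lr)^2 := by
    rw [mul_pow, mul_pow, mul_pow, mul_pow, hνsq, hμsq, hLrsq]
    field_simp
    ring
  have ha2 : 0 ≤ 2*ν*(N:ℝ) := by positivity
  have hb2 : 0 ≤ (2*(K:ℝ)-1)*μ*Lr :=
    mul_nonneg (mul_nonneg (by linarith) hμpos.le) hLrnn
  have hkey : 2*ν*(N:ℝ) ≤ (2*(K:ℝ)-1)*μ*Lr := by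
    have h := Real.sqrt_le_sqrt hsq2.le
    rwa [Real.sqrt_sq ha2, Real.sqrt_sq hb2] at h
  have h2νH : 2*ν*(H:ℝ) ≤ (2*(K:ℝ)-1)*μ := by
    have hm := mul_le_mul_of_nonneg_left hHLr (le_of_lt (by positivity : (0:ℝ) < 2*ν))
    have hν2 : 0 ≤ 2*ν*((K:ℝ)+1) := by positivity
    have h1 : 2*ν*(H:ℝ)*Lr ≤ (2*(K:ℝ)-1)*μ*Lr := by linarith [hm, hkey, hν2]
    exact le_of_mul_le_mul_right h1 hLrpos
  constructor
  · -- l2 bound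
    have hsum : ∑ i : Fin N, x i ^ 2 ≤ 1 := by
      have hb : ∀ i : Fin N, x i ^2 ≤ ν^2 + (if N - K ≤ i.val then μ^2 else 0) := by
        intro i
        show (if ((i : ℕ) : ℝ) < H * Lr then ν * s ⌊((i : ℕ) : ℝ) / Lr⌋₊
          else if N - K ≤ (i : ℕ) then μ * s H * (-1) ^ (i : ℕ) else 0)^2 ≤ _
        by_cases h1 : ((i.val:ℕ):ℝ) < (H:ℝ)*Lr
        · rw [if_pos h1, mul_pow, hssq, mul_one]
          split_ifs with h2
          · linarith [sq_nonneg μ]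
          · rw [add_zero]
        · rw [if_neg h1]
          by_cases h2 : N - K ≤ i.val
          · rw [if_pos h2, if_pos h2, mul_pow, mul_pow, hssq, hnegsq]
            linarith [sq_nonneg ν]
          · rw [if_neg h2, if_neg h2]
            linarith [sq_nonneg ν]
      calc ∑ i : Fin N, x i ^2
          ≤ ∑ i : Fin N, (ν^2 + if N - K ≤ i.val then μ^2 else 0) :=
            Finset.sum_le_sum (fun i _ => hb i)
        _ = N * ν^2 + ((N - (N-K) : ℕ):ℝ) * μ^2 := by
            rw [Finset.sum_add_distrib, Finset.sum_const, Finset.card_univ, Fintype.card_fin,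
              Fin.sum_univ_eq_sum_range (fun j => if N - K ≤ j then μ^2 else 0) N,
              sum_indic, nsmul_eq_mul]
        _ = N * ν^2 + K * μ^2 := by rw [show N - (N-K) = K from by omega]
        _ = 1 := by
            rw [hνsq, hμsq]
            field_simp
            ring
    show Real.sqrt (∑ i, x i ^ 2) ≤ 1
    have h := Real.sqrt_le_sqrt hsum
    simpa using h
  · refine ⟨KK, hKKcard, ?_⟩
    rw [l1_restr, l1_restr, hRHS]
    calc ∑ i ∈ KKᶜ, |Df x i| ≤ 2*ν*(H:ℝ) := hLHS
      _ ≤ (2*(K:ℝ)-1) * μ := h2νH
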